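/- arXiv:1409.3810 — 2 statements merged into one kernel-verified Lean document; each statement's English description precedes it below -/
import Mathlib

section
/- Let H be a Hilbert space and μ a positive operator-valued Borel measure on 𝔻 with finite Carleson intensity ‖μ‖_C = sup_I ‖μ(Q_I)‖/A(Q_I) < ∞. Then for every f ∈ L²(H, dA), Σ_{I dyadic} ⟨μ(T_I)(1/A(T_I) ∫_{T_I} f dA), (1/A(T_I) ∫_{T_I} f dA)⟩ ≤ C·‖μ‖_C·∫_𝔻 ‖f‖² dA, where C is an absolute constant independent of the dimension of H. -/
open MeasureTheory Metric Complex Set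
open scoped ENNReal NNReal InnerProductSpace

noncomputable section

/-- Normalized Lebesgue area measure on the unit disc. -/
def areaM : Measure ℂ := (ENNReal.ofReal Real.pi)⁻¹ • (volume.restrict (ball (0:ℂ) 1))

/-- The dyadic arc of level `n`, index `k` (half-open parametrization). -/
def dyadicArc (n k : ℕ) : Set ℂ :=
  {z | ∃ t : ℝ, 2 * Real.pi * k / 2 ^ n ≤ t ∧ t < 2 * Real.pi * (k + 1) / 2 ^ n ∧
    z = Complex.exp (t * Complex.I)}

/-- The Carleson square over the dyadic arc of level `n`, index `k`. -/
def carlesonBox (n k : ℕ) : Set ℂ :=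
  {z | ‖z‖ < 1 ∧ (z / (‖z‖ : ℂ)) ∈ dyadicArc n k ∧ 1 - 1 / 2 ^ n ≤ ‖z‖}

/-- The top half of the Carleson square. -/
def topHalf (n k : ℕ) : Set ℂ :=
  {z | z ∈ carlesonBox n k ∧ ‖z‖ < 1 - 1 / 2 ^ (n + 1)}

/-- The disc `D_{z,r}` of radius `r(1-|z|)` centered at `z`, inside the unit disc. -/
def discAt (z : ℂ) (r : ℝ) : Set ℂ :=
  {ζ : ℂ | ‖ζ‖ < 1 ∧ ‖ζ - z‖ < r * (1 - ‖z‖)}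

namespace CarlesonAux

/-- The angle of `z` normalized to `[0, 2π)`. -/
def theta (z : ℂ) : ℝ := if 0 ≤ z.arg then z.arg else z.arg + 2 * Real.pi

lemma measurable_theta : Measurable theta := by
  unfold theta
  exact Measurable.ite (measurableSet_le measurable_const Complex.measurable_arg)
    Complex.measurable_arg (Complex.measurable_arg.add_const _)

lemma theta_exp {t : ℝ} (h0 : 0 ≤ t) (h2 : t < 2 * Real.pi) :
    theta (Complex.exp (t * Complex.I)) = t := by
  rcases le_or_gt t Real.pi with h | h
  · have harg : (Complex.exp (t * Complex.I)).arg = t := by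
      rw [Complex.exp_mul_I]
      exact Complex.arg_cos_add_sin_mul_I ⟨lt_of_lt_of_le (by linarith [Real.pi_pos]) h0, h⟩
    simp [theta, harg, h0]
  · have hper : (Complex.exp (t * Complex.I)) = Complex.exp ((t - 2 * Real.pi) * Complex.I) := by
      have h1 : ((t : ℂ)) * Complex.I = ((t - 2 * Real.pi : ℝ) : ℂ) * Complex.I
          + 2 * (Real.pi : ℂ) * Complex.I := by push_cast; ring
      rw [h1, Complex.exp_add, Complex.exp_two_pi_mul_I, mul_one]
      congr 1
      push_cast
      ring
    have harg : (Complex.exp (t * Complex.I)).arg = t - 2 * Real.pi := by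
      have h3 : -Real.pi < t - 2 * Real.pi := by linarith
      have h4 : t - 2 * Real.pi ≤ Real.pi := by linarith [Real.pi_pos]
      have h5 := Complex.arg_cos_add_sin_mul_I (θ := t - 2 * Real.pi) ⟨h3, h4⟩
      rw [hper, Complex.exp_mul_I]
      exact_mod_cast h5
    have hneg : ¬ (0 ≤ (Complex.exp (t * Complex.I)).arg) := by
      rw [harg]; push_neg; linarith
    unfold theta
    rw [if_neg hneg, harg]
    ring

lemma exp_theta (z : ℂ) : Complex.exp ((theta z : ℂ) * Complex.I)
    = Complex.exp ((z.arg : ℂ) * Complex.I) := by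
  unfold theta
  split_ifs with h
  · rfl
  · push_cast
    rw [add_mul, Complex.exp_add]
    have : (2 : ℂ) * (Real.pi : ℂ) * Complex.I = 2 * Real.pi * Complex.I := by ring
    rw [this, Complex.exp_two_pi_mul_I, mul_one]

lemma arg_div_norm {z : ℂ} (hz : z ≠ 0) : (z / (‖z‖ : ℂ)).arg = z.arg := by
  have hpos : (0:ℝ) < ‖z‖⁻¹ := inv_pos.2 (norm_pos_iff.2 hz)
  have h : z / (‖z‖ : ℂ) = ((‖z‖⁻¹ : ℝ) : ℂ) * z := by
    push_cast; field_simp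
  rw [h, Complex.arg_real_mul z hpos]

lemma div_norm_eq_exp_theta {z : ℂ} (hz : z ≠ 0) :
    z / (‖z‖ : ℂ) = Complex.exp ((theta z : ℂ) * Complex.I) := by
  have habs : ((‖z‖ : ℝ) : ℂ) ≠ 0 := by
    exact_mod_cast (norm_ne_zero_iff.2 hz)
  rw [exp_theta]
  rw [div_eq_iff habs]
  rw [mul_comm]
  exact (Complex.norm_mul_exp_arg_mul_I z).symm

lemma carlesonBox_eq (n k : ℕ) (hk : k < 2 ^ n) :
    carlesonBox n k = {z : ℂ | z ≠ 0 ∧ 1 - 1 / 2 ^ n ≤ ‖z‖ ∧ ‖z‖ < 1 ∧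
      2 * Real.pi * k / 2 ^ n ≤ theta z ∧ theta z < 2 * Real.pi * (k + 1) / 2 ^ n} := by
  have hA : (0:ℝ) ≤ 2 * Real.pi * k / 2 ^ n := by positivity
  have hB : 2 * Real.pi * (k + 1) / 2 ^ n ≤ 2 * Real.pi := by
    rw [div_le_iff₀ (by positivity)]
    have hk1 : ((k:ℝ) + 1) ≤ 2 ^ n := by exact_mod_cast Nat.succ_le_of_lt hk
    nlinarith [Real.pi_pos]
  ext z
  constructor
  · rintro ⟨hz1, ⟨t, ht1, ht2, hzt⟩, hz3⟩
    have hzne : z ≠ 0 := by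
      intro h
      rw [h] at hzt
      simp only [zero_div] at hzt
      exact (Complex.exp_ne_zero _) hzt.symm
    have ht0 : 0 ≤ t := le_trans hA ht1
    have ht2π : t < 2 * Real.pi := lt_of_lt_of_le ht2 hB
    have harg : theta z = t := by
      have h1 : theta z = theta (z / (‖z‖ : ℂ)) := by
        unfold theta; rw [arg_div_norm hzne]
      rw [h1, hzt, theta_exp ht0 ht2π]
    exact ⟨hzne, hz3, hz1, by rw [harg]; exact ht1, by rw [harg]; exact ht2⟩
  · rintro ⟨hzne, h2, h1, hθ1, hθ2⟩
    exact ⟨h1, ⟨theta z, hθ1, hθ2, div_norm_eq_exp_theta hzne⟩, h2⟩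

lemma measurableSet_carlesonBox (n k : ℕ) (hk : k < 2 ^ n) :
    MeasurableSet (carlesonBox n k) := by
  rw [carlesonBox_eq n k hk]
  have h1 : MeasurableSet {z : ℂ | z ≠ 0} :=
    (MeasurableSet.singleton (0:ℂ)).compl
  have h2 : MeasurableSet {z : ℂ | 1 - 1 / 2 ^ n ≤ ‖z‖} :=
    measurableSet_le measurable_const measurable_norm
  have h3 : MeasurableSet {z : ℂ | ‖z‖ < 1} :=
    measurableSet_lt measurable_norm measurable_const
  have h4 : MeasurableSet {z : ℂ | 2 * Real.pi * k / 2 ^ n ≤ theta z} :=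
    measurableSet_le measurable_const measurable_theta
  have h5 : MeasurableSet {z : ℂ | theta z < 2 * Real.pi * (k + 1) / 2 ^ n} :=
    measurableSet_lt measurable_theta measurable_const
  exact h1.inter (h2.inter (h3.inter (h4.inter h5)))

lemma measurableSet_topHalf (n k : ℕ) (hk : k < 2 ^ n) :
    MeasurableSet (topHalf n k) := by
  have : topHalf n k = carlesonBox n k ∩ {z : ℂ | ‖z‖ < 1 - 1 / 2 ^ (n+1)} := rfl
  rw [this]
  exact (measurableSet_carlesonBox n k hk).inter
    (measurableSet_lt measurable_norm measurable_const)

end CarlesonAux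

namespace CarlesonAux

lemma norm_exp_I_sub_exp_I (s t : ℝ) :
    ‖Complex.exp ((s:ℂ) * Complex.I) - Complex.exp ((t:ℂ) * Complex.I)‖ ≤ |s - t| := by
  have hd : ∀ x : ℝ, HasDerivAt (fun y : ℝ => Complex.exp ((y:ℂ) * Complex.I))
      (Complex.exp ((x:ℂ) * Complex.I) * Complex.I) x := by
    intro x
    have h1 : HasDerivAt (fun y : ℝ => ((y:ℂ) * Complex.I)) Complex.I x := by
      simpa using (Complex.ofRealCLM.hasDerivAt (x := x)).mul_const Complex.I
    simpa using h1.cexp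
  have h := Convex.norm_image_sub_le_of_norm_hasDerivWithin_le
    (f := fun y : ℝ => Complex.exp ((y:ℂ) * Complex.I))
    (f' := fun x : ℝ => Complex.exp ((x:ℂ) * Complex.I) * Complex.I) (s := Set.univ) (C := 1)
    (fun x _ => (hd x).hasDerivWithinAt)
    (fun x _ => by simp [Complex.norm_exp_ofReal_mul_I])
    convex_univ (Set.mem_univ t) (Set.mem_univ s)
  simpa [Real.norm_eq_abs] using h

lemma abs_arg_le {w : ℂ} (hw : 0 < w.re) : |w.arg| ≤ Real.pi / 2 * (|w.im| / w.re) := by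
  have hwne : w ≠ 0 := by
    intro h; rw [h] at hw; simp at hw
  have habs : (0:ℝ) < ‖w‖ := norm_pos_iff.mpr hwne
  have hre : w.re ≤ ‖w‖ := Complex.re_le_norm w
  have hlt : |w.arg| < Real.pi / 2 := Complex.abs_arg_lt_pi_div_two_iff.2 (Or.inl hw)
  have hsin : Real.sin w.arg = w.im / ‖w‖ := Complex.sin_arg w
  have hsinabs : Real.sin |w.arg| = |w.im| / ‖w‖ := by
    rcases abs_cases w.arg with ⟨h1, h2⟩ | ⟨h1, h2⟩
    · rw [h1, hsin]
      have him : 0 ≤ w.im := by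
        by_contra h
        push_neg at h
        have : Real.sin w.arg < 0 := by
          rw [hsin]; exact div_neg_of_neg_of_pos h habs
        have harg0 : 0 ≤ Real.sin w.arg := Real.sin_nonneg_of_nonneg_of_le_pi h2
          (by linarith [Real.pi_pos, hlt, abs_nonneg w.arg, h1])
        linarith
      rw [_root_.abs_of_nonneg him]
    · rw [h1, Real.sin_neg, hsin]
      have him : w.im ≤ 0 := by
        by_contra h
        push_neg at h
        have : 0 < Real.sin w.arg := by
          rw [hsin]; exact div_pos h habs
        have : Real.sin w.arg ≤ 0 := by
          apply Real.sin_nonpos_of_nonpos_of_neg_pi_le (le_of_lt h2) (by linarith [hlt])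
        linarith
      rw [_root_.abs_of_nonpos him]
      ring
  have hJ : 2 / Real.pi * |w.arg| ≤ Real.sin |w.arg| :=
    Real.mul_le_sin (abs_nonneg _) (le_of_lt hlt)
  have hdiv : |w.im| / ‖w‖ ≤ |w.im| / w.re :=
    div_le_div_of_nonneg_left (abs_nonneg _) hw hre
  have hπ := Real.pi_pos
  have h2 : 2 / Real.pi * |w.arg| ≤ |w.im| / w.re := by
    calc 2 / Real.pi * |w.arg| ≤ Real.sin |w.arg| := hJ
    _ = |w.im| / ‖w‖ := hsinabs
    _ ≤ |w.im| / w.re := hdiv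
  calc |w.arg| = Real.pi / 2 * (2 / Real.pi * |w.arg|) := by field_simp
  _ ≤ Real.pi / 2 * (|w.im| / w.re) := mul_le_mul_of_nonneg_left h2 (by positivity)

lemma carlesonBox_subset_ball (n k : ℕ) :
    carlesonBox n k ⊆
      Metric.ball (Complex.exp ((2 * Real.pi * k / 2 ^ n : ℝ) * Complex.I)) (8 / 2 ^ n) := by
  rintro z ⟨hz1, ⟨t, ht1, ht2, hzt⟩, hz3⟩
  have hzne : z ≠ 0 := by
    intro h
    rw [h] at hzt
    simp only [zero_div] at hzt
    exact (Complex.exp_ne_zero _) hzt.symm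
  have hnz : (0:ℝ) < ‖z‖ := norm_pos_iff.2 hzne
  have hz : z = (‖z‖ : ℂ) * Complex.exp ((t:ℂ) * Complex.I) := by
    have hne : (‖z‖ : ℂ) ≠ 0 := by exact_mod_cast ne_of_gt hnz
    rw [← hzt, mul_comm, div_mul_cancel₀ _ hne]
  have he : (0:ℝ) < 1 / 2 ^ n := by positivity
  rw [Metric.mem_ball, dist_eq_norm]
  set a : ℝ := 2 * Real.pi * k / 2 ^ n with ha
  have hcalc : ‖z - Complex.exp ((a:ℝ) * Complex.I)‖
      ≤ ‖z - Complex.exp ((t:ℂ) * Complex.I)‖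
        + ‖Complex.exp ((t:ℂ) * Complex.I) - Complex.exp ((a:ℝ) * Complex.I)‖ := by
    have := norm_sub_le_norm_sub_add_norm_sub z (Complex.exp ((t:ℂ) * Complex.I))
      (Complex.exp ((a:ℝ) * Complex.I))
    exact this
  have h1 : ‖z - Complex.exp ((t:ℂ) * Complex.I)‖ = 1 - ‖z‖ := by
    conv_lhs => rw [hz]
    have hfac : (‖z‖ : ℂ) * Complex.exp ((t:ℂ) * Complex.I) - Complex.exp ((t:ℂ) * Complex.I)
        = ((‖z‖ : ℂ) - 1) * Complex.exp ((t:ℂ) * Complex.I) := by ring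
    rw [hfac, norm_mul]
    have : ‖Complex.exp ((t:ℂ) * Complex.I)‖ = 1 := by
      exact Complex.norm_exp_ofReal_mul_I t
    rw [this, mul_one]
    have : ((‖z‖ : ℂ) - 1) = ((‖z‖ - 1 : ℝ) : ℂ) := by push_cast; ring
    rw [this, Complex.norm_real, Real.norm_eq_abs, _root_.abs_of_nonpos (by linarith)]
    ring
  have h2 : ‖Complex.exp ((t:ℂ) * Complex.I) - Complex.exp ((a:ℝ) * Complex.I)‖ ≤ |t - a| :=
    norm_exp_I_sub_exp_I t a
  have hta : |t - a| < 7 / 2 ^ n := by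
    rw [_root_.abs_of_nonneg (by linarith)]
    have hπ : Real.pi < 3.15 := Real.pi_lt_d2
    have : t - a < 2 * Real.pi * (k + 1) / 2 ^ n - 2 * Real.pi * k / 2 ^ n := by linarith
    have heq : 2 * Real.pi * (k + 1) / 2 ^ n - 2 * Real.pi * k / 2 ^ n
        = 2 * Real.pi / 2 ^ n := by ring
    rw [heq] at this
    calc t - a < 2 * Real.pi / 2 ^ n := this
    _ ≤ 7 / 2 ^ n := by
      apply div_le_div_of_nonneg_right ?_ (by positivity)
      · linarith
  calc ‖z - Complex.exp ((a:ℝ) * Complex.I)‖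
      ≤ (1 - ‖z‖) + |t - a| := by rw [← h1]; exact le_trans hcalc (by linarith)
  _ < 1 / 2 ^ n + 7 / 2 ^ n := by
      have : 1 - ‖z‖ ≤ 1 / 2 ^ n := by linarith
      linarith
  _ = 8 / 2 ^ n := by ring

end CarlesonAux

namespace CarlesonAux

lemma ball_subset_topHalf (n k : ℕ) :
    Metric.ball (((1 - (3/4)/2^n : ℝ) : ℂ) *
        Complex.exp ((Real.pi * (2*k+1)/2^n : ℝ) * Complex.I)) (1/(8*2^n))
      ⊆ topHalf n k := by
  set e : ℝ := 1/2^n with he_def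
  have he : 0 < e := by positivity
  have he1 : e ≤ 1 := by
    rw [he_def]
    rw [div_le_one (by positivity)]
    exact one_le_pow₀ (by norm_num)
  set m : ℝ := Real.pi * (2*k+1)/2^n with hm_def
  set r₀ : ℝ := 1 - (3/4)/2^n with hr₀_def
  have hr₀e : r₀ = 1 - (3/4)*e := by rw [hr₀_def, he_def]; ring
  have hr₀pos : (1/4 : ℝ) ≤ r₀ := by rw [hr₀e]; nlinarith
  set z₀ : ℂ := ((r₀ : ℝ) : ℂ) * Complex.exp ((m : ℝ) * Complex.I) with hz₀_def
  intro ζ hζ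
  rw [Metric.mem_ball, dist_eq_norm] at hζ
  have hρ : (1:ℝ)/(8*2^n) = e/8 := by rw [he_def]; ring
  rw [hρ] at hζ
  have hz₀norm : ‖z₀‖ = r₀ := by
    rw [hz₀_def, norm_mul, Complex.norm_real, Real.norm_eq_abs,
      _root_.abs_of_nonneg (le_trans (by norm_num : (0:ℝ) ≤ 1/4) hr₀pos),
      Complex.norm_exp_ofReal_mul_I, mul_one]
  have hlow : 1 - e ≤ ‖ζ‖ := by
    have h := norm_sub_norm_le z₀ ζ
    rw [norm_sub_rev z₀ ζ] at h
    rw [hz₀norm] at h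
    have : r₀ - ‖ζ‖ < e/8 := lt_of_le_of_lt h hζ
    rw [hr₀e] at this
    linarith
  have hup : ‖ζ‖ < 1 - (1/2)*e := by
    have h := norm_le_norm_add_norm_sub' ζ z₀
    rw [hz₀norm] at h
    have : ‖ζ‖ < r₀ + e/8 := by
      have : ‖ζ - z₀‖ < e/8 := hζ
      calc ‖ζ‖ ≤ r₀ + ‖ζ - z₀‖ := h
      _ < r₀ + e/8 := by linarith
    rw [hr₀e] at this
    linarith
  have hζ1 : ‖ζ‖ < 1 := by linarith
  -- the rotated point
  set w : ℂ := ζ * Complex.exp (-((m:ℂ) * Complex.I)) with hw_def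
  have hz₀E : z₀ * Complex.exp (-((m:ℂ) * Complex.I)) = ((r₀ : ℝ) : ℂ) := by
    rw [hz₀_def, mul_assoc, ← Complex.exp_add, add_neg_cancel, Complex.exp_zero, mul_one]
  have hnormE : ‖Complex.exp (-((m:ℂ) * Complex.I))‖ = 1 := by
    have : -((m:ℂ) * Complex.I) = ((-m : ℝ) : ℂ) * Complex.I := by push_cast; ring
    rw [this, Complex.norm_exp_ofReal_mul_I]
  have hwr : w - ((r₀ : ℝ) : ℂ) = (ζ - z₀) * Complex.exp (-((m:ℂ) * Complex.I)) := by
    rw [sub_mul, hz₀E, hw_def]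
  have hwd : ‖w - ((r₀ : ℝ) : ℂ)‖ < e/8 := by
    rw [hwr, norm_mul, hnormE, mul_one]
    exact hζ
  have him : |w.im| < e/8 := by
    have h1 : (w - ((r₀ : ℝ) : ℂ)).im = w.im := by
      rw [Complex.sub_im, Complex.ofReal_im, sub_zero]
    have h2 : |(w - ((r₀ : ℝ) : ℂ)).im| ≤ ‖w - ((r₀ : ℝ) : ℂ)‖ := by
      exact Complex.abs_im_le_norm _
    rw [h1] at h2
    linarith
  have hre : 1/8 < w.re := by
    have h1 : (w - ((r₀ : ℝ) : ℂ)).re = w.re - r₀ := by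
      rw [Complex.sub_re, Complex.ofReal_re]
    have h2 : |(w - ((r₀ : ℝ) : ℂ)).re| ≤ ‖w - ((r₀ : ℝ) : ℂ)‖ := by
      exact Complex.abs_re_le_norm _
    rw [h1] at h2
    have h3 : |w.re - r₀| < e/8 := lt_of_le_of_lt h2 hwd
    have h4 : r₀ - e/8 < w.re := by
      rcases abs_lt.1 h3 with ⟨h5, _⟩
      linarith
    rw [hr₀e] at h4
    nlinarith
  have hwrepos : 0 < w.re := by linarith
  have hargle : |w.arg| ≤ Real.pi / 2 * (|w.im| / w.re) := abs_arg_le hwrepos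
  have hπ := Real.pi_pos
  have harg : |w.arg| < Real.pi * e / 2 := by
    have hdiv : |w.im| / w.re < e := by
      rw [div_lt_iff₀ hwrepos]
      have : e/8 ≤ e * w.re := by nlinarith
      linarith
    calc |w.arg| ≤ Real.pi / 2 * (|w.im| / w.re) := hargle
    _ < Real.pi / 2 * e := by
        apply mul_lt_mul_of_pos_left hdiv (by positivity)
    _ = Real.pi * e / 2 := by ring
  have harg' := abs_lt.1 harg
  -- arc bounds
  have hma : m - 2 * Real.pi * k / 2 ^ n = Real.pi * e := by
    rw [hm_def, he_def]; field_simp; ring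
  have hbm : 2 * Real.pi * (k + 1) / 2 ^ n - m = Real.pi * e := by
    rw [hm_def, he_def]; field_simp; ring
  -- polar representation of ζ
  have hwne : w ≠ 0 := by
    intro h; rw [h] at hwrepos; simp at hwrepos
  have hζw : ζ = w * Complex.exp ((m:ℂ) * Complex.I) := by
    rw [hw_def, mul_assoc, ← Complex.exp_add, neg_add_cancel, Complex.exp_zero, mul_one]
  have habsζ : ‖ζ‖ = ‖w‖ := by
    conv_lhs => rw [hζw]
    rw [norm_mul]
    have : ‖Complex.exp ((m:ℂ) * Complex.I)‖ = 1 := by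
      have hcast : ((m:ℂ) * Complex.I) = ((m:ℝ):ℂ) * Complex.I := rfl
      rw [hcast, Complex.norm_exp_ofReal_mul_I]
    rw [this, mul_one]
  have habsne : ((‖w‖ : ℝ) : ℂ) ≠ 0 := by
    exact_mod_cast (norm_ne_zero_iff.2 hwne)
  have hpolar : ζ / ((‖ζ‖ : ℝ) : ℂ) = Complex.exp (((m + w.arg : ℝ) : ℂ) * Complex.I) := by
    rw [habsζ, div_eq_iff habsne, hζw]
    conv_lhs => rw [← Complex.norm_mul_exp_arg_mul_I w]
    have hexp : Complex.exp ((w.arg : ℂ) * Complex.I) * Complex.exp ((m:ℂ) * Complex.I)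
        = Complex.exp (((m + w.arg : ℝ) : ℂ) * Complex.I) := by
      rw [← Complex.exp_add]
      congr 1
      push_cast
      ring
    rw [mul_assoc, hexp, mul_comm]
  refine ⟨⟨hζ1, ⟨m + w.arg, ?_, ?_, hpolar⟩, ?_⟩, ?_⟩
  · linarith
  · linarith
  · rw [← he_def]; linarith
  · have h2 : (1:ℝ)/2^(n+1) = e/2 := by rw [he_def, pow_succ]; ring
    rw [h2]; linarith
end CarlesonAux

namespace CarlesonAux

instance : IsFiniteMeasure areaM := by
  constructor
  rw [areaM, Measure.smul_apply, Measure.restrict_apply MeasurableSet.univ,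
    Set.univ_inter, smul_eq_mul]
  exact ENNReal.mul_lt_top (ENNReal.inv_lt_top.2 (ENNReal.ofReal_pos.2 Real.pi_pos))
    measure_ball_lt_top

lemma volume_cball (z : ℂ) {r : ℝ} (hr : 0 ≤ r) :
    volume (Metric.ball z r) = ENNReal.ofReal (r ^ 2) * volume (Metric.ball (0:ℂ) 1) := by
  rw [Measure.addHaar_ball volume z hr, Complex.finrank_real_complex]

lemma areaM_le_of_subset_ball {s : Set ℂ} {z : ℂ} {r : ℝ} (hr : 0 ≤ r)
    (h : s ⊆ Metric.ball z r) :
    areaM s ≤ (ENNReal.ofReal Real.pi)⁻¹ *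
      (ENNReal.ofReal (r ^ 2) * volume (Metric.ball (0:ℂ) 1)) := by
  rw [areaM, Measure.smul_apply, smul_eq_mul]
  refine mul_le_mul_right ?_ _
  calc (volume.restrict (ball (0:ℂ) 1)) s ≤ volume s := Measure.restrict_apply_le _ _
  _ ≤ volume (Metric.ball z r) := measure_mono h
  _ = _ := volume_cball z hr

lemma le_areaM_of_ball_subset {s : Set ℂ} (hs : MeasurableSet s)
    (hsub : s ⊆ Metric.ball (0:ℂ) 1) {z : ℂ} {r : ℝ} (hr : 0 ≤ r)
    (h : Metric.ball z r ⊆ s) :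
    (ENNReal.ofReal Real.pi)⁻¹ *
      (ENNReal.ofReal (r ^ 2) * volume (Metric.ball (0:ℂ) 1)) ≤ areaM s := by
  rw [areaM, Measure.smul_apply, smul_eq_mul, Measure.restrict_apply hs,
    Set.inter_eq_self_of_subset_left hsub]
  refine mul_le_mul_right ?_ _
  rw [← volume_cball z hr]
  exact measure_mono h

lemma topHalf_subset_unitBall (n k : ℕ) : topHalf n k ⊆ Metric.ball (0:ℂ) 1 :=
  fun z hz => mem_ball_zero_iff.2 hz.1.1

lemma areaM_topHalf_pos (n k : ℕ) (hk : k < 2 ^ n) : 0 < areaM (topHalf n k) := by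
  refine lt_of_lt_of_le ?_ (le_areaM_of_ball_subset (measurableSet_topHalf n k hk)
    (topHalf_subset_unitBall n k) (by positivity : (0:ℝ) ≤ 1/(8*2^n))
    (ball_subset_topHalf n k))
  apply ENNReal.mul_pos
  · exact (ENNReal.inv_pos.2 ENNReal.ofReal_ne_top).ne'
  · exact (ENNReal.mul_pos (ENNReal.ofReal_pos.2 (by positivity)).ne'
      (measure_ball_pos volume 0 one_pos).ne').ne'

lemma areaM_box_le (n k : ℕ) (hk : k < 2 ^ n) :
    areaM (carlesonBox n k) ≤ 4096 * areaM (topHalf n k) := by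
  have h1 := areaM_le_of_subset_ball (z := Complex.exp ((2 * Real.pi * k / 2 ^ n : ℝ) * Complex.I))
    (by positivity : (0:ℝ) ≤ 8/2^n) (carlesonBox_subset_ball n k)
  have h2 := le_areaM_of_ball_subset (measurableSet_topHalf n k hk)
    (topHalf_subset_unitBall n k) (by positivity : (0:ℝ) ≤ 1/(8*2^n))
    (ball_subset_topHalf n k)
  have hr : ((8:ℝ)/2^n) ^ 2 = 4096 * ((1/(8*2^n)) ^ 2) := by
    field_simp
    ring
  have h3 : ENNReal.ofReal (((8:ℝ)/2^n) ^ 2)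
      = 4096 * ENNReal.ofReal (((1:ℝ)/(8*2^n)) ^ 2) := by
    rw [hr, ENNReal.ofReal_mul (by norm_num)]
    norm_num
  calc areaM (carlesonBox n k)
      ≤ (ENNReal.ofReal Real.pi)⁻¹ *
        (ENNReal.ofReal (((8:ℝ)/2^n) ^ 2) * volume (Metric.ball (0:ℂ) 1)) := h1
  _ = 4096 * ((ENNReal.ofReal Real.pi)⁻¹ *
        (ENNReal.ofReal (((1:ℝ)/(8*2^n)) ^ 2) * volume (Metric.ball (0:ℂ) 1))) := by
      rw [h3]; ring
  _ ≤ 4096 * areaM (topHalf n k) := mul_le_mul_right h2 _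

lemma areaM_box_toReal_le (n k : ℕ) (hk : k < 2 ^ n) :
    (areaM (carlesonBox n k)).toReal ≤ 4096 * (areaM (topHalf n k)).toReal := by
  have h := areaM_box_le n k hk
  have h1 : areaM (topHalf n k) ≠ ⊤ := measure_ne_top _ _
  have h2 : (4096 : ℝ≥0∞) * areaM (topHalf n k) ≠ ⊤ :=
    ENNReal.mul_ne_top (by norm_num) h1
  calc (areaM (carlesonBox n k)).toReal ≤ ((4096 : ℝ≥0∞) * areaM (topHalf n k)).toReal :=
      ENNReal.toReal_mono h2 h
  _ = 4096 * (areaM (topHalf n k)).toReal := by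
      rw [ENNReal.toReal_mul]
      norm_num

lemma areaM_topHalf_toReal_pos (n k : ℕ) (hk : k < 2 ^ n) :
    0 < (areaM (topHalf n k)).toReal :=
  ENNReal.toReal_pos (areaM_topHalf_pos n k hk).ne' (measure_ne_top _ _)

/-- Disjointness of the top halves. -/
lemma topHalf_disjoint : Pairwise (Function.onFun Disjoint
    (fun p : (Σ n : ℕ, Fin (2 ^ n)) => topHalf p.1 p.2)) := by
  have key : ∀ (n₁ n₂ k₁ k₂ : ℕ), k₁ < 2^n₁ → k₂ < 2^n₂ →
      (¬ (n₁ = n₂ ∧ k₁ = k₂)) → ∀ z, z ∈ topHalf n₁ k₁ → z ∈ topHalf n₂ k₂ → False := by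
    intro n₁ n₂ k₁ k₂ hk₁ hk₂ hne z hz₁ hz₂
    obtain ⟨hb₁, ht₁⟩ := hz₁
    obtain ⟨hb₂, ht₂⟩ := hz₂
    rw [carlesonBox_eq n₁ k₁ hk₁] at hb₁
    rw [carlesonBox_eq n₂ k₂ hk₂] at hb₂
    obtain ⟨-, hge₁, -, hθl₁, hθu₁⟩ := hb₁
    obtain ⟨-, hge₂, -, hθl₂, hθu₂⟩ := hb₂
    have hn : n₁ = n₂ := by
      by_contra hnn
      have haux : ∀ (a b : ℕ), a < b → 1 - 1/2^a ≤ ‖z‖ → ‖z‖ < 1 - 1/2^(a+1) →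
          1 - 1/2^b ≤ ‖z‖ → False := by
        intro a b hab h1 h2 h3
        have : (1:ℝ)/2^b ≤ 1/2^(a+1) := by
          apply div_le_div_of_nonneg_left (by norm_num) (by positivity)
          exact pow_le_pow_right₀ (by norm_num) hab
        linarith
      rcases Nat.lt_or_ge n₁ n₂ with h | h
      · exact haux n₁ n₂ (by omega) hge₁ ht₁ hge₂
      · exact haux n₂ n₁ (by omega) hge₂ ht₂ hge₁
    subst hn
    have hkk : k₁ ≠ k₂ := fun h => hne ⟨rfl, h⟩
    have hπ := Real.pi_pos
    have haux : ∀ (a b : ℕ), a < b → theta z < 2*Real.pi*(a+1)/2^n₁ →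
        2*Real.pi*b/2^n₁ ≤ theta z → False := by
      intro a b hab h1 h2
      have hcast : ((a:ℝ) + 1) ≤ (b:ℝ) := by exact_mod_cast hab
      have : 2*Real.pi*(a+1)/2^n₁ ≤ 2*Real.pi*b/2^n₁ := by
        apply div_le_div_of_nonneg_right ?_ (by positivity)
        nlinarith
      linarith
    rcases Nat.lt_or_ge k₁ k₂ with h | h
    · exact haux k₁ k₂ h hθu₁ hθl₂
    · exact haux k₂ k₁ (by omega) hθu₂ hθl₁
  intro p q hpq
  rw [Function.onFun]
  rw [Set.disjoint_left]
  intro z hz₁ hz₂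
  refine key p.1 q.1 p.2 q.2 p.2.isLt q.2.isLt ?_ z hz₁ hz₂
  rintro ⟨h1, h2⟩
  apply hpq
  obtain ⟨n₁, k₁⟩ := p
  obtain ⟨n₂, k₂⟩ := q
  dsimp at h1 h2
  subst h1
  congr 1
  exact Fin.ext h2

end CarlesonAux

namespace CarlesonAux

lemma sq_integral_le {X : Type*} [MeasurableSpace X] (ν : Measure X) [IsFiniteMeasure ν]
    {g : X → ℝ} (hg : Integrable g ν) (hg2 : Integrable (fun x => g x ^ 2) ν) :
    (∫ x, g x ∂ν) ^ 2 ≤ (ν Set.univ).toReal * ∫ x, g x ^ 2 ∂ν := by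
  set M := (ν Set.univ).toReal with hM_def
  have hM : 0 ≤ M := ENNReal.toReal_nonneg
  rcases eq_or_lt_of_le hM with hM0 | hMpos
  · have hν : ν = 0 := by
      have h0 : ν Set.univ = 0 := by
        rcases (ENNReal.toReal_eq_zero_iff _).1 hM0.symm with h | h
        · exact h
        · exact absurd h (measure_ne_top ν _)
      exact Measure.measure_univ_eq_zero.1 h0
    rw [hν]
    simp
  · set a := (∫ x, g x ∂ν) / M with ha_def
    have hkey : 0 ≤ ∫ x, (g x - a)^2 ∂ν := integral_nonneg fun x => sq_nonneg _
    have hInt : ∫ x, (g x - a)^2 ∂ν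
        = ∫ x, g x^2 ∂ν - 2*a*(∫ x, g x ∂ν) + a^2 * M := by
      have hcongr : ∀ x, (g x - a)^2 = g x^2 - 2*a*g x + a^2 := fun x => by ring
      calc ∫ x, (g x - a)^2 ∂ν = ∫ x, (g x^2 - 2*a*g x + a^2) ∂ν := by
            apply integral_congr_ae
            exact Filter.Eventually.of_forall hcongr
      _ = ∫ x, (g x^2 - 2*a*g x) ∂ν + ∫ _x, (a^2 : ℝ) ∂ν :=
            integral_add (hg2.sub ((hg.const_mul (2*a)))) (integrable_const _)
      _ = (∫ x, g x^2 ∂ν - ∫ x, 2*a*g x ∂ν) + a^2 * M := by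
            rw [integral_sub hg2 (hg.const_mul (2*a)), integral_const, smul_eq_mul, measureReal_def, ← hM_def]
            ring
      _ = ∫ x, g x^2 ∂ν - 2*a*(∫ x, g x ∂ν) + a^2 * M := by
            rw [integral_const_mul]
    rw [hInt] at hkey
    have haM : a * M = ∫ x, g x ∂ν := div_mul_cancel₀ _ (ne_of_gt hMpos)
    nlinarith [hkey, haM, hMpos, sq_nonneg a]

section OpMeasure

variable {H : Type} [NormedAddCommGroup H] [InnerProductSpace ℂ H] [CompleteSpace H]
  (μ : Set ℂ → H →L[ℂ] H)

def pairSeq (S T : Set ℂ) : ℕ → Set ℂ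
  | 0 => S
  | 1 => T
  | _ => ∅

lemma apply_empty_eq_zero
    (hadd : ∀ s : ℕ → Set ℂ, (∀ i, MeasurableSet (s i)) → Pairwise (Function.onFun Disjoint s) →
      ∀ e : H, HasSum (fun i => μ (s i) e) (μ (⋃ i, s i) e)) (e : H) : μ ∅ e = 0 := by
  have h := hadd (fun _ => ∅) (fun _ => MeasurableSet.empty)
    (fun i j hij => by simp [Function.onFun]) e
  have h2 : Filter.Tendsto (fun _ : ℕ => μ ∅ e) Filter.atTop (nhds 0) :=
    h.summable.tendsto_atTop_zero
  exact tendsto_nhds_unique tendsto_const_nhds h2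

lemma apply_union
    (hadd : ∀ s : ℕ → Set ℂ, (∀ i, MeasurableSet (s i)) → Pairwise (Function.onFun Disjoint s) →
      ∀ e : H, HasSum (fun i => μ (s i) e) (μ (⋃ i, s i) e))
    {S T : Set ℂ} (hS : MeasurableSet S) (hT : MeasurableSet T)
    (hd : Disjoint S T) (e : H) : μ (S ∪ T) e = μ S e + μ T e := by
  have hmeas : ∀ i, MeasurableSet (pairSeq S T i) := by
    intro i
    match i with
    | 0 => exact hS
    | 1 => exact hT
    | (n+2) => exact MeasurableSet.empty
  have hpair : Pairwise (Function.onFun Disjoint (pairSeq S T)) := by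
    intro i j hij
    rw [Function.onFun]
    match i, j with
    | 0, 0 => exact absurd rfl hij
    | 0, 1 => exact hd
    | 1, 0 => exact hd.symm
    | 1, 1 => exact absurd rfl hij
    | 0, (n+2) => exact Set.disjoint_empty _
    | 1, (n+2) => exact Set.disjoint_empty _
    | (n+2), j => exact Set.empty_disjoint _
  have hU : (⋃ i, pairSeq S T i) = S ∪ T := by
    apply Set.Subset.antisymm
    · refine Set.iUnion_subset fun i => ?_
      match i with
      | 0 => exact Set.subset_union_left
      | 1 => exact Set.subset_union_right
      | (n+2) => exact Set.empty_subset _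
    · rintro x (hx | hx)
      · exact Set.mem_iUnion.2 ⟨0, hx⟩
      · exact Set.mem_iUnion.2 ⟨1, hx⟩
  have h := hadd (pairSeq S T) hmeas hpair e
  rw [hU] at h
  have h2 : HasSum (fun i => μ (pairSeq S T i) e)
      (∑ i ∈ Finset.range 2, μ (pairSeq S T i) e) := by
    apply hasSum_sum_of_ne_finset_zero
    intro b hb
    have hb2 : 2 ≤ b := by simp [Finset.mem_range] at hb; omega
    obtain ⟨d, rfl⟩ := Nat.exists_eq_add_of_le' hb2
    show μ (pairSeq S T (d + 2)) e = 0
    have : pairSeq S T (d + 2) = ∅ := rfl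
    rw [this, apply_empty_eq_zero μ hadd]
  have h3 : (∑ i ∈ Finset.range 2, μ (pairSeq S T i) e) = μ S e + μ T e := by
    rw [Finset.sum_range_succ, Finset.sum_range_one]
    rfl
  rw [← h3]
  exact h.unique h2

lemma reApply_mono (hpos : ∀ s : Set ℂ, (μ s).IsPositive)
    (hadd : ∀ s : ℕ → Set ℂ, (∀ i, MeasurableSet (s i)) → Pairwise (Function.onFun Disjoint s) →
      ∀ e : H, HasSum (fun i => μ (s i) e) (μ (⋃ i, s i) e))
    {S T : Set ℂ} (hS : MeasurableSet S) (hT : MeasurableSet T) (hST : S ⊆ T) (x : H) :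
    (μ S).reApplyInnerSelf x ≤ (μ T).reApplyInnerSelf x := by
  have hU : S ∪ (T \ S) = T := Set.union_diff_cancel hST
  have h := apply_union μ hadd hS (hT.diff hS) disjoint_sdiff_right x
  rw [hU] at h
  rw [ContinuousLinearMap.reApplyInnerSelf_apply, ContinuousLinearMap.reApplyInnerSelf_apply,
    h, inner_add_left, map_add]
  have hnn := (hpos (T \ S)).2 x
  rw [ContinuousLinearMap.reApplyInnerSelf_apply] at hnn
  linarith

lemma reApply_le_norm (A : H →L[ℂ] H) (x : H) :
    A.reApplyInnerSelf x ≤ ‖A‖ * ‖x‖^2 := by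
  rw [ContinuousLinearMap.reApplyInnerSelf_apply]
  calc RCLike.re (inner (𝕜 := ℂ) (A x) x) ≤ ‖(inner (𝕜 := ℂ) (A x) x : ℂ)‖ :=
      RCLike.re_le_norm _
  _ ≤ ‖A x‖ * ‖x‖ := norm_inner_le_norm _ _
  _ ≤ ‖A‖ * ‖x‖ * ‖x‖ := mul_le_mul_of_nonneg_right (A.le_opNorm x) (norm_nonneg x)
  _ = ‖A‖ * ‖x‖^2 := by ring

end OpMeasure

lemma integrable_sq_norm {H : Type} [NormedAddCommGroup H]
    {f : ℂ → H} (hf : MemLp f 2 areaM) :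
    Integrable (fun z => ‖f z‖^2) areaM := by
  have h := hf.integrable_norm_rpow (by norm_num) (by norm_num)
  have h2 : ((2:ℝ≥0∞)).toReal = (2:ℝ) := by norm_num
  rw [h2] at h
  convert h using 2 with z
  rw [← Real.rpow_natCast ‖f z‖ 2]
  norm_num

lemma key_bound {H : Type} [NormedAddCommGroup H] [InnerProductSpace ℂ H] [CompleteSpace H]
    (μ : Set ℂ → H →L[ℂ] H) (hpos : ∀ s : Set ℂ, (μ s).IsPositive)
    (hadd : ∀ s : ℕ → Set ℂ, (∀ i, MeasurableSet (s i)) → Pairwise (Function.onFun Disjoint s) →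
      ∀ e : H, HasSum (fun i => μ (s i) e) (μ (⋃ i, s i) e))
    (c : ℝ) (hc : 0 ≤ c)
    (hcar : ∀ n k : ℕ, k < 2 ^ n →
      ‖μ (carlesonBox n k)‖ ≤ c * (areaM (carlesonBox n k)).toReal)
    (f : ℂ → H) (hf : MemLp f 2 areaM) (n k : ℕ) (hk : k < 2 ^ n) :
    (μ (topHalf n k)).reApplyInnerSelf
      ((areaM (topHalf n k)).toReal⁻¹ • ∫ z in topHalf n k, f z ∂areaM)
      ≤ 4096 * c * ∫ z in topHalf n k, ‖f z‖^2 ∂areaM := by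
  set T := topHalf n k with hT_def
  set m := (areaM T).toReal with hm_def
  have hmpos : 0 < m := areaM_topHalf_toReal_pos n k hk
  set x := m⁻¹ • ∫ z in T, f z ∂areaM with hx_def
  have hTm : MeasurableSet T := measurableSet_topHalf n k hk
  have hQm : MeasurableSet (carlesonBox n k) := measurableSet_carlesonBox n k hk
  have hsub : T ⊆ carlesonBox n k := fun z hz => hz.1
  have hf2 : Integrable (fun z => ‖f z‖^2) areaM := integrable_sq_norm hf
  have hfT1 : Integrable f (areaM.restrict T) :=
    ((hf.restrict T).mono_exponent (by norm_num : (1:ℝ≥0∞) ≤ 2)).integrable le_rfl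
  have hnormT : Integrable (fun z => ‖f z‖) (areaM.restrict T) := hfT1.norm
  have hsqT : Integrable (fun z => ‖f z‖^2) (areaM.restrict T) := hf2.restrict
  have hI2nonneg : 0 ≤ ∫ z in T, ‖f z‖^2 ∂areaM := integral_nonneg fun z => sq_nonneg _
  have hCS : (∫ z in T, ‖f z‖ ∂areaM)^2 ≤ m * ∫ z in T, ‖f z‖^2 ∂areaM := by
    have h := sq_integral_le (areaM.restrict T) hnormT hsqT
    rwa [Measure.restrict_apply_univ] at h
  have hxnorm : ‖x‖ ≤ m⁻¹ * ∫ z in T, ‖f z‖ ∂areaM := by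
    rw [hx_def, norm_smul, Real.norm_eq_abs, _root_.abs_of_nonneg (inv_nonneg.2 hmpos.le)]
    exact mul_le_mul_of_nonneg_left (norm_integral_le_integral_norm _) (by positivity)
  have hxsq : ‖x‖^2 ≤ m⁻¹ * ∫ z in T, ‖f z‖^2 ∂areaM := by
    have h1 : ‖x‖^2 ≤ (m⁻¹ * ∫ z in T, ‖f z‖ ∂areaM)^2 :=
      pow_le_pow_left₀ (norm_nonneg x) hxnorm 2
    calc ‖x‖^2 ≤ (m⁻¹ * ∫ z in T, ‖f z‖ ∂areaM)^2 := h1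
    _ = m⁻¹ * m⁻¹ * (∫ z in T, ‖f z‖ ∂areaM)^2 := by ring
    _ ≤ m⁻¹ * m⁻¹ * (m * ∫ z in T, ‖f z‖^2 ∂areaM) :=
        mul_le_mul_of_nonneg_left hCS (by positivity)
    _ = (m * m⁻¹) * (m⁻¹ * ∫ z in T, ‖f z‖^2 ∂areaM) := by ring
    _ = m⁻¹ * ∫ z in T, ‖f z‖^2 ∂areaM := by
        rw [mul_inv_cancel₀ hmpos.ne', one_mul]
  calc (μ T).reApplyInnerSelf x ≤ (μ (carlesonBox n k)).reApplyInnerSelf x :=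
      reApply_mono μ hpos hadd hTm hQm hsub x
  _ ≤ ‖μ (carlesonBox n k)‖ * ‖x‖^2 := reApply_le_norm _ _
  _ ≤ (c * (areaM (carlesonBox n k)).toReal) * ‖x‖^2 :=
      mul_le_mul_of_nonneg_right (hcar n k hk) (sq_nonneg _)
  _ ≤ (c * (4096 * m)) * ‖x‖^2 := by
      apply mul_le_mul_of_nonneg_right ?_ (sq_nonneg _)
      exact mul_le_mul_of_nonneg_left (areaM_box_toReal_le n k hk) hc
  _ ≤ (c * (4096 * m)) * (m⁻¹ * ∫ z in T, ‖f z‖^2 ∂areaM) :=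
      mul_le_mul_of_nonneg_left hxsq (by positivity)
  _ = 4096 * c * ((m * m⁻¹) * ∫ z in T, ‖f z‖^2 ∂areaM) := by ring
  _ = 4096 * c * ∫ z in T, ‖f z‖^2 ∂areaM := by
      rw [mul_inv_cancel₀ hmpos.ne', one_mul]

end CarlesonAux


/-- Dimension-free sufficiency in the dyadic Carleson embedding: if the operator-valued
measure `μ` has Carleson intensity at most `c`, then the dyadic Bergman embedding
quadratic form of `f` is bounded by `C c ∫ ‖f‖² dA`, with `C` absolute. -/
theorem dyadic_embedding_of_carleson_intensity :
    ∃ C : ℝ, 0 < C ∧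
      ∀ (H : Type) [NormedAddCommGroup H] [InnerProductSpace ℂ H] [CompleteSpace H]
        (μ : Set ℂ → H →L[ℂ] H),
        (∀ s : Set ℂ, (μ s).IsPositive) →
        (∀ s : ℕ → Set ℂ, (∀ i, MeasurableSet (s i)) → Pairwise (Function.onFun Disjoint s) →
          ∀ e : H, HasSum (fun i => μ (s i) e) (μ (⋃ i, s i) e)) →
        ∀ c : ℝ, 0 ≤ c →
        (∀ n k : ℕ, k < 2 ^ n →
          ‖μ (carlesonBox n k)‖ ≤ c * (areaM (carlesonBox n k)).toReal) →
        ∀ f : ℂ → H, MemLp f 2 areaM →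
        ∑' p : (Σ n : ℕ, Fin (2 ^ n)),
          (μ (topHalf p.1 p.2)).reApplyInnerSelf
            ((areaM (topHalf p.1 p.2)).toReal⁻¹ • ∫ z in topHalf p.1 p.2, f z ∂areaM) ≤
          C * c * ∫ z, ‖f z‖ ^ 2 ∂areaM := by
  refine ⟨4096, by norm_num, ?_⟩
  intro H _ _ _ μ hpos hadd c hc hcar f hf
  have hf2 : Integrable (fun z => ‖f z‖^2) areaM := CarlesonAux.integrable_sq_norm hf
  have hnn : 0 ≤ 4096 * c * ∫ z, ‖f z‖^2 ∂areaM :=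
    mul_nonneg (mul_nonneg (by norm_num) hc) (integral_nonneg fun z => sq_nonneg _)
  refine tsum_le_of_sum_le' hnn ?_
  intro s
  calc ∑ p ∈ s, (μ (topHalf p.1 p.2)).reApplyInnerSelf
        ((areaM (topHalf p.1 p.2)).toReal⁻¹ • ∫ z in topHalf p.1 p.2, f z ∂areaM)
      ≤ ∑ p ∈ s, 4096 * c * ∫ z in topHalf p.1 p.2, ‖f z‖^2 ∂areaM :=
      Finset.sum_le_sum fun p _ =>
        CarlesonAux.key_bound μ hpos hadd c hc hcar f hf p.1 p.2 p.2.isLt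
  _ = 4096 * c * ∑ p ∈ s, ∫ z in topHalf p.1 p.2, ‖f z‖^2 ∂areaM := by
      rw [Finset.mul_sum]
  _ = 4096 * c * ∫ z in ⋃ p ∈ s, topHalf p.1 p.2, ‖f z‖^2 ∂areaM := by
      rw [integral_biUnion_finset s
        (fun p _ => CarlesonAux.measurableSet_topHalf p.1 p.2 p.2.isLt)
        (fun p _ q _ hpq => CarlesonAux.topHalf_disjoint hpq)
        (fun p _ => hf2.integrableOn)]
  _ ≤ 4096 * c * ∫ z, ‖f z‖^2 ∂areaM :=
      mul_le_mul_of_nonneg_left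
        (setIntegral_le_integral hf2 (Filter.Eventually.of_forall fun z => sq_nonneg _))
        (mul_nonneg (by norm_num) hc)
end
end

section
/- Converse to sup-norm extraction: let F : 𝔻 → B(H) be measurable and W an operator weight whose averages satisfy k₁[W]_{λ,r} ≤ [W]_{z,r} ≤ k₂[W]_{λ,r} whenever z ∈ D_{λ,r}. If sup_λ (1−|λ|) ‖[W]^{1/2}_{λ,r} F(λ) [W]^{−1/2}_{λ,r}‖ < ∞, then there is C with ∫_{D_{λ,r}} ‖[W]^{1/2}_{λ,r} F(z) [W]^{−1/2}_{λ,r} e‖² dA(z) ≤ C‖e‖² for all e ∈ H and λ ∈ 𝔻. -/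
open MeasureTheory Metric Complex Set
open scoped ENNReal NNReal InnerProductSpace

noncomputable section

lemma norm_sq_sqrt_eq {H : Type*} [NormedAddCommGroup H] [InnerProductSpace ℂ H]
    [CompleteSpace H] (S A : H →L[ℂ] H) (hS : S.IsPositive) (hSA : S ∘L S = A) (x : H) :
    ‖S x‖ ^ 2 = A.reApplyInnerSelf x := by
  have hsym := hS.isSelfAdjoint.isSymmetric
  rw [ContinuousLinearMap.reApplyInnerSelf, ← hSA, ContinuousLinearMap.comp_apply]
  have := hsym (S x) x
  simp only [ContinuousLinearMap.coe_coe] at this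
  rw [this, inner_self_eq_norm_sq]

lemma discAt_eq (lam : ℂ) (r : ℝ) :
    discAt lam r = ball (0 : ℂ) 1 ∩ ball lam (r * (1 - ‖lam‖)) := by
  ext ζ
  simp [discAt, mem_ball, dist_eq_norm]

lemma areaM_discAt_le (lam : ℂ) (r : ℝ) (hr : 0 ≤ r) (hlam : ‖lam‖ < 1) :
    areaM (discAt lam r) ≤ ENNReal.ofReal ((r * (1 - ‖lam‖)) ^ 2) := by
  set R := r * (1 - ‖lam‖) with hR
  have hR0 : 0 ≤ R := by
    have : (0:ℝ) ≤ 1 - ‖lam‖ := by linarith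
    positivity
  have hπ : (ENNReal.ofReal Real.pi) ≠ 0 := by
    simpa using (ENNReal.ofReal_pos.2 Real.pi_pos).ne'
  have hπt : (ENNReal.ofReal Real.pi) ≠ ⊤ := ENNReal.ofReal_ne_top
  have hmeas : areaM (discAt lam r)
      = (ENNReal.ofReal Real.pi)⁻¹ * volume (discAt lam r ∩ ball (0:ℂ) 1) := by
    simp [areaM, Measure.smul_apply, Measure.restrict_apply' measurableSet_ball, smul_eq_mul]
  rw [hmeas]
  have hsub : discAt lam r ∩ ball (0:ℂ) 1 ⊆ ball lam R := by
    rw [discAt_eq]; intro x hx; exact hx.1.2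
  calc (ENNReal.ofReal Real.pi)⁻¹ * volume (discAt lam r ∩ ball (0:ℂ) 1)
      ≤ (ENNReal.ofReal Real.pi)⁻¹ * volume (ball lam R) :=
        mul_le_mul_right (measure_mono hsub) _
  _ = (ENNReal.ofReal Real.pi)⁻¹ * (ENNReal.ofReal R ^ 2 * NNReal.pi) := by
        rw [Complex.volume_ball]
  _ = ENNReal.ofReal (R ^ 2) := by
        rw [show ((NNReal.pi : ℝ≥0∞)) = ENNReal.ofReal Real.pi by
          rw [← NNReal.coe_real_pi, ENNReal.ofReal_coe_nnreal]]
        rw [ENNReal.ofReal_pow hR0]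
        calc (ENNReal.ofReal Real.pi)⁻¹ * (ENNReal.ofReal R ^ 2 * ENNReal.ofReal Real.pi)
            = ENNReal.ofReal R ^ 2 * ((ENNReal.ofReal Real.pi)⁻¹ * ENNReal.ofReal Real.pi) := by
              ring
        _ = ENNReal.ofReal R ^ 2 := by rw [ENNReal.inv_mul_cancel hπ hπt, mul_one]

/-- Converse to the sup-norm extraction, for the weighted conjugation
`[W]^{1/2}_{λ,r} F(z) [W]^{−1/2}_{λ,r}`, using the comparability of the averages. -/
theorem conjugated_integral_bound_of_sup
    (H : Type*) [NormedAddCommGroup H] [InnerProductSpace ℂ H] [CompleteSpace H]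
    (F : ℂ → H →L[ℂ] H) (hF : Measurable F) (r : ℝ) (hr : 0 < r) (hr1 : r < 1)
    -- `Wav λ = [W]_{λ,r}`, with square root `Ws λ` and its inverse `Wsinv λ`
    (Wav Ws Wsinv : ℂ → H →L[ℂ] H)
    (hWs : ∀ lam : ℂ, ‖lam‖ < 1 → (Ws lam).IsPositive ∧ Ws lam ∘L Ws lam = Wav lam)
    (hWsinv : ∀ lam : ℂ, ‖lam‖ < 1 →
      Ws lam ∘L Wsinv lam = 1 ∧ Wsinv lam ∘L Ws lam = 1)
    -- comparability of the averages on `D_{λ,r}`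
    (k₁ k₂ : ℝ) (hk₁ : 0 < k₁) (hk₂ : 0 < k₂)
    (hcomp : ∀ lam z : ℂ, ‖lam‖ < 1 → z ∈ discAt lam r → ∀ e : H,
      k₁ * (Wav lam).reApplyInnerSelf e ≤ (Wav z).reApplyInnerSelf e ∧
      (Wav z).reApplyInnerSelf e ≤ k₂ * (Wav lam).reApplyInnerSelf e)
    -- the sup-norm hypothesis
    (M : ℝ)
    (hsup : ∀ lam : ℂ, ‖lam‖ < 1 →
      (1 - ‖lam‖) * ‖Ws lam ∘L F lam ∘L Wsinv lam‖ ≤ M) :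
    ∃ C : ℝ, ∀ (e : H) (lam : ℂ), ‖lam‖ < 1 →
      ∫ z in discAt lam r, ‖(Ws lam ∘L F z ∘L Wsinv lam) e‖ ^ 2 ∂areaM ≤ C * ‖e‖ ^ 2 := by
  have hM : 0 ≤ M := by
    have h0 := hsup 0 (by simp)
    have : (0:ℝ) ≤ (1 - ‖(0:ℂ)‖) * ‖Ws 0 ∘L F 0 ∘L Wsinv 0‖ := by
      simp only [norm_zero, sub_zero, one_mul]; exact norm_nonneg _
    linarith
  refine ⟨k₂ / k₁ * M ^ 2 * r ^ 2 / (1 - r) ^ 2, fun e lam hlam => ?_⟩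
  set s := discAt lam r with hs_def
  set L : ℝ := ‖lam‖ with hL
  have hL1 : 0 < 1 - L := by linarith
  have hr1' : 0 < 1 - r := by linarith
  -- pointwise bound
  set K : ℝ := k₂ / k₁ * (M / ((1 - r) * (1 - L))) ^ 2 * ‖e‖ ^ 2 with hK
  have hK0 : 0 ≤ K := by positivity
  have hpt : ∀ z ∈ s, ‖(Ws lam ∘L F z ∘L Wsinv lam) e‖ ^ 2 ≤ K := by
    intro z hz
    obtain ⟨hz1, hz2⟩ := hz
    -- 1 - ‖z‖ ≥ (1-r)(1-L)
    have hzd : (1 - r) * (1 - L) ≤ 1 - ‖z‖ := by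
      have h1 : ‖z‖ ≤ ‖lam‖ + ‖z - lam‖ := by
        calc ‖z‖ = ‖lam + (z - lam)‖ := by ring_nf
        _ ≤ ‖lam‖ + ‖z - lam‖ := norm_add_le _ _
      nlinarith [hz2]
    have hz1' : 0 < 1 - ‖z‖ := by nlinarith
    set y : H := Wsinv lam e with hy
    set g : H := F z y with hg
    have happ : (Ws lam ∘L F z ∘L Wsinv lam) e = Ws lam g := rfl
    -- step 1
    have e1 : ‖Ws lam g‖ ^ 2 = (Wav lam).reApplyInnerSelf g :=
      norm_sq_sqrt_eq _ _ (hWs lam hlam).1 (hWs lam hlam).2 g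
    have e2 : ‖Ws z g‖ ^ 2 = (Wav z).reApplyInnerSelf g :=
      norm_sq_sqrt_eq _ _ (hWs z hz1).1 (hWs z hz1).2 g
    have c1 := (hcomp lam z hlam ⟨hz1, hz2⟩ g).1
    have step1 : ‖Ws lam g‖ ^ 2 ≤ k₁⁻¹ * ‖Ws z g‖ ^ 2 := by
      rw [e1, e2]
      calc (Wav lam).reApplyInnerSelf g = k₁⁻¹ * (k₁ * (Wav lam).reApplyInnerSelf g) := by
            field_simp
      _ ≤ k₁⁻¹ * (Wav z).reApplyInnerSelf g :=
            mul_le_mul_of_nonneg_left c1 (by positivity)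
    -- step 2 : Ws z g = (Ws z ∘L F z ∘L Wsinv z) (Ws z y)
    have hyz : Wsinv z (Ws z y) = y := by
      have := (hWsinv z hz1).2
      calc Wsinv z (Ws z y) = (Wsinv z ∘L Ws z) y := rfl
      _ = y := by rw [this]; rfl
    have step2 : Ws z g = (Ws z ∘L F z ∘L Wsinv z) (Ws z y) := by
      simp [ContinuousLinearMap.comp_apply, hyz, hg]
    -- step 3
    have e3 : ‖Ws z y‖ ^ 2 = (Wav z).reApplyInnerSelf y :=
      norm_sq_sqrt_eq _ _ (hWs z hz1).1 (hWs z hz1).2 y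
    have e4 : ‖Ws lam y‖ ^ 2 = (Wav lam).reApplyInnerSelf y :=
      norm_sq_sqrt_eq _ _ (hWs lam hlam).1 (hWs lam hlam).2 y
    have hye : Ws lam y = e := by
      have := (hWsinv lam hlam).1
      calc Ws lam y = (Ws lam ∘L Wsinv lam) e := rfl
      _ = e := by rw [this]; rfl
    have c2 := (hcomp lam z hlam ⟨hz1, hz2⟩ y).2
    have step3 : ‖Ws z y‖ ^ 2 ≤ k₂ * ‖e‖ ^ 2 := by
      rw [e3]
      rw [← hye]
      rw [e4] at *
      linarith [c2]
    -- step 4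
    have step4 : ‖Ws z ∘L F z ∘L Wsinv z‖ ≤ M / (1 - ‖z‖) := by
      rw [le_div_iff₀ hz1']
      have := hsup z hz1
      linarith [this]
    -- combine
    have hb : ‖Ws z g‖ ≤ ‖Ws z ∘L F z ∘L Wsinv z‖ * ‖Ws z y‖ := by
      rw [step2]; exact ContinuousLinearMap.le_opNorm _ _
    have hb2 : ‖Ws z g‖ ^ 2 ≤ (M / (1 - ‖z‖)) ^ 2 * (k₂ * ‖e‖ ^ 2) := by
      have h1 : ‖Ws z g‖ ^ 2 ≤ (‖Ws z ∘L F z ∘L Wsinv z‖ * ‖Ws z y‖) ^ 2 := by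
        apply pow_le_pow_left₀ (norm_nonneg _) hb
      have h2 : (‖Ws z ∘L F z ∘L Wsinv z‖ * ‖Ws z y‖) ^ 2
          = ‖Ws z ∘L F z ∘L Wsinv z‖ ^ 2 * ‖Ws z y‖ ^ 2 := by ring
      have h3 : ‖Ws z ∘L F z ∘L Wsinv z‖ ^ 2 ≤ (M / (1 - ‖z‖)) ^ 2 :=
        pow_le_pow_left₀ (norm_nonneg _) step4 2
      calc ‖Ws z g‖ ^ 2 ≤ ‖Ws z ∘L F z ∘L Wsinv z‖ ^ 2 * ‖Ws z y‖ ^ 2 := by rw [← h2]; exact h1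
      _ ≤ (M / (1 - ‖z‖)) ^ 2 * (k₂ * ‖e‖ ^ 2) :=
        mul_le_mul h3 step3 (by positivity) (by positivity)
    have hdenom : M / (1 - ‖z‖) ≤ M / ((1 - r) * (1 - L)) := by
      apply div_le_div_of_nonneg_left hM (by positivity) hzd
    have hb3 : (M / (1 - ‖z‖)) ^ 2 ≤ (M / ((1 - r) * (1 - L))) ^ 2 :=
      pow_le_pow_left₀ (by positivity) hdenom 2
    rw [happ]
    calc ‖Ws lam g‖ ^ 2 ≤ k₁⁻¹ * ‖Ws z g‖ ^ 2 := step1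
    _ ≤ k₁⁻¹ * ((M / (1 - ‖z‖)) ^ 2 * (k₂ * ‖e‖ ^ 2)) := by
        apply mul_le_mul_of_nonneg_left hb2 (by positivity)
    _ ≤ k₁⁻¹ * ((M / ((1 - r) * (1 - L))) ^ 2 * (k₂ * ‖e‖ ^ 2)) := by
        apply mul_le_mul_of_nonneg_left _ (by positivity)
        apply mul_le_mul_of_nonneg_right hb3 (by positivity)
    _ = K := by rw [hK]; ring
  -- integration
  have hsmeas : MeasurableSet s := by
    rw [hs_def, discAt_eq]; exact measurableSet_ball.inter measurableSet_ball
  have hμ : areaM s ≤ ENNReal.ofReal ((r * (1 - L)) ^ 2) := areaM_discAt_le lam r hr.le hlam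
  have hμfin : areaM s < ⊤ := lt_of_le_of_lt hμ ENNReal.ofReal_lt_top
  have hmeasf : Measurable fun z => ‖(Ws lam ∘L F z ∘L Wsinv lam) e‖ ^ 2 := by
    have hc0 : Continuous fun T : H →L[ℂ] H => Ws lam (T (Wsinv lam e)) :=
      (Ws lam).continuous.comp (ContinuousLinearMap.apply ℂ H (Wsinv lam e)).continuous
    have hc : Continuous fun T : H →L[ℂ] H => ‖(Ws lam ∘L T ∘L Wsinv lam) e‖ ^ 2 :=
      hc0.norm.pow 2
    exact hc.measurable.comp hF
  have hintK : IntegrableOn (fun _ : ℂ => K) s areaM := integrableOn_const hμfin.ne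
  have hint : IntegrableOn (fun z => ‖(Ws lam ∘L F z ∘L Wsinv lam) e‖ ^ 2) s areaM := by
    apply Integrable.mono' hintK hmeasf.aestronglyMeasurable
    refine (ae_restrict_iff' hsmeas).2 (ae_of_all _ fun z hz => ?_)
    simp only [Real.norm_eq_abs]
    rw [_root_.abs_of_nonneg (sq_nonneg _)]
    exact hpt z hz
  calc ∫ z in s, ‖(Ws lam ∘L F z ∘L Wsinv lam) e‖ ^ 2 ∂areaM
      ≤ ∫ _ in s, K ∂areaM := setIntegral_mono_on hint hintK hsmeas hpt
  _ = (areaM s).toReal * K := by rw [setIntegral_const, smul_eq_mul]; rfl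
  _ ≤ (r * (1 - L)) ^ 2 * K := by
      apply mul_le_mul_of_nonneg_right _ hK0
      exact ENNReal.toReal_le_of_le_ofReal (by positivity) hμ
  _ = k₂ / k₁ * M ^ 2 * r ^ 2 / (1 - r) ^ 2 * ‖e‖ ^ 2 := by
      rw [hK]; field_simp
end
end
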